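/- The determinant of the Higgs field Ψ^u(z) = Σ_{k=1}^{4} Ψₖ/(z - zₖ) with poles at z₁=-1, z₂=0, z₃=1, z₄=∞ (taking the sum over the three finite poles with Ψ₄ omitted from the pole at infinity, i.e. Ψ^u(z) = Ψ₁/(z+1) + Ψ₂/z + Ψ₃/(z-1)) equals -(u - u³)/(z - z³). In particular, Ψ^u(z) is nilpotent for all z if and only if u ∈ {0, 1, -1}. -/

import Mathlib

open Matrix

lemma sq_fin_two_eq_zero (a b c d : ℂ) (h1 : a + d = 0)
    (h2 : a * d - b * c = 0) : !![a, b; c, d] * !![a, b; c, d] = 0 := by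
  rw [Matrix.mul_fin_two]
  have hd : d = -a := by linear_combination h1
  subst hd
  have hbc : b * c = -(a * a) := by linear_combination -h2
  rw [show a * a + b * c = 0 by linear_combination hbc,
      show c * a + -a * c = 0 by ring,
      show a * b + b * -a = 0 by ring,
      show c * b + -a * -a = 0 by linear_combination hbc]
  ext i j
  fin_cases i <;> fin_cases j <;> rfl

theorem det_higgs_field (u : ℂ)
    (Ψ : ℂ → Matrix (Fin 2) (Fin 2) ℂ)
    (hΨ : ∀ z : ℂ, Ψ z =
      (z + 1)⁻¹ • !![-u, u ^ 2; -1, u] + z⁻¹ • !![0, 0; 1 - u, 0] +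
        (z - 1)⁻¹ • !![u, -u; u, -u]) :
    (∀ z : ℂ, z ≠ -1 → z ≠ 0 → z ≠ 1 →
      (Ψ z).det = -(u - u ^ 3) / (z - z ^ 3)) ∧
    ((∀ z : ℂ, z ≠ -1 → z ≠ 0 → z ≠ 1 → (Ψ z) ^ 2 = 0) ↔
      (u = 0 ∨ u = 1 ∨ u = -1)) := by
  have hmat : ∀ z : ℂ, Ψ z =
      !![(z + 1)⁻¹ * (-u) + (z - 1)⁻¹ * u,
         (z + 1)⁻¹ * u ^ 2 + (z - 1)⁻¹ * (-u);
         (z + 1)⁻¹ * (-1) + z⁻¹ * (1 - u) + (z - 1)⁻¹ * u,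
         (z + 1)⁻¹ * u + (z - 1)⁻¹ * (-u)] := by
    intro z
    rw [hΨ z]
    ext i j
    fin_cases i <;> fin_cases j <;>
      simp [Matrix.add_apply, Matrix.smul_apply, smul_eq_mul]
  have hdet : ∀ z : ℂ, z ≠ -1 → z ≠ 0 → z ≠ 1 →
      (Ψ z).det = -(u - u ^ 3) / (z - z ^ 3) := by
    intro z h1 h0 h2
    have ha : z + 1 ≠ 0 := fun h => h1 (by linear_combination h)
    have hb : z - 1 ≠ 0 := fun h => h2 (by linear_combination h)
    have hc : z - z ^ 3 ≠ 0 := by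
      intro h
      have : z * (1 - z) * (1 + z) = 0 := by linear_combination h
      rcases mul_eq_zero.mp this with h | h
      · rcases mul_eq_zero.mp h with h | h
        · exact h0 h
        · exact h2 (by linear_combination -h)
      · exact h1 (by linear_combination h)
    rw [hmat z, Matrix.det_fin_two_of, eq_div_iff hc]
    field_simp [ha, hb, h0]
    have hD : z - z ^ 3 * 4 + z ^ 5 * 6 - z ^ 7 * 4 + z ^ 9 ≠ 0 := by
      have he : z - z ^ 3 * 4 + z ^ 5 * 6 - z ^ 7 * 4 + z ^ 9
          = z * (z + 1) ^ 4 * (z - 1) ^ 4 := by ring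
      rw [he]
      exact mul_ne_zero (mul_ne_zero h0 (pow_ne_zero _ ha)) (pow_ne_zero _ hb)
    ring
  refine ⟨hdet, ?_, ?_⟩
  · intro h
    have h2 := h 2 (by norm_num) (by norm_num) (by norm_num)
    have hd : (Ψ 2).det = 0 := by
      have := congrArg Matrix.det h2
      rw [Matrix.det_pow, Matrix.det_zero] at this
      exact pow_eq_zero_iff (by norm_num) |>.mp this
    rw [hdet 2 (by norm_num) (by norm_num) (by norm_num)] at hd
    have h3 : u - u ^ 3 = 0 := by
      field_simp at hd
      linear_combination -hd
    have : u * (1 - u) * (1 + u) = 0 := by linear_combination h3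
    rcases mul_eq_zero.mp this with h' | h'
    · rcases mul_eq_zero.mp h' with h' | h'
      · exact Or.inl h'
      · exact Or.inr (Or.inl (by linear_combination -h'))
    · exact Or.inr (Or.inr (by linear_combination h'))
  · intro hu z h1 h0 h2
    have ha : z + 1 ≠ 0 := fun h => h1 (by linear_combination h)
    have hb : z - 1 ≠ 0 := fun h => h2 (by linear_combination h)
    rw [hmat z, pow_two]
    apply sq_fin_two_eq_zero
    · ring
    · field_simp
      rcases hu with rfl | rfl | rfl <;> ring
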